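/- Let (L₁, v_p) be a valued field of characteristic 0 with v_p L₁ = ℤ·v_p(p) and perfect residue field K of characteristic p. Choose a_0 = p and a_i with a_i^p = a_{i-1}, and set L₂ = L₁(a_i | i ∈ ℕ). Then v_p extends uniquely to L₂, v_p L₂ = (1/p^∞)ℤ·v_p(p), and L₂v_p = K. -/

import Mathlib

section aux

noncomputable instance auxOrderBot {Γ : Type*} [LinearOrderedCommGroupWithZero Γ] : OrderBot Γ where
  bot := 0
  bot_le := fun _ => zero_le'

variable {Γ : Type*} [LinearOrderedCommGroupWithZero Γ]

lemma aux_pow_le_one_iff {γ : Γ} {k : ℕ} (hk : k ≠ 0) : γ ^ k ≤ 1 ↔ γ ≤ 1 := by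
  constructor
  · intro h
    by_contra h1
    exact absurd h (not_le.mpr (one_lt_pow₀ (not_le.mp h1) hk))
  · exact fun h => pow_le_one₀ zero_le' h

lemma aux_pow_lt_one_iff {γ : Γ} {k : ℕ} (hk : k ≠ 0) : γ ^ k < 1 ↔ γ < 1 := by
  constructor
  · intro h
    by_contra h1
    have : (1:Γ) = 1 ^ k := (one_pow k).symm
    exact absurd h (not_lt.mpr (by
      calc (1:Γ) = 1 ^ k := (one_pow k).symm
      _ ≤ γ ^ k := pow_le_pow_left₀ zero_le' (not_lt.mp h1) k))
  · exact fun h => pow_lt_one₀ zero_le' h hk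

lemma aux_pow_inj {γ δ : Γ} {k : ℕ} (hk : k ≠ 0) (h : γ ^ k = δ ^ k) : γ = δ := by
  rcases lt_trichotomy γ δ with hlt | heq | hlt
  · exact absurd h (ne_of_lt (pow_lt_pow_left₀ hlt zero_le' hk))
  · exact heq
  · exact absurd h.symm (ne_of_lt (pow_lt_pow_left₀ hlt zero_le' hk))

lemma aux_zpow_inj {π : Γ} (h0 : π ≠ 0) (h1 : π < 1) {m m' : ℤ} (h : π ^ m = π ^ m') :
    m = m' :=
  (zpow_right_strictAnti₀ (zero_lt_iff.mpr h0) h1).injective h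

lemma aux_map_sum {L : Type*} [Field L] (u : Valuation L Γ) {ι : Type*} (s : Finset ι)
    (f : ι → L)
    (h : ∀ i ∈ s, ∀ j ∈ s, i ≠ j → u (f i) = u (f j) → u (f i) = 0) :
    u (∑ i ∈ s, f i) = s.sup fun i => u (f i) := by
  classical
  induction s using Finset.induction_on with
  | empty => simp; rfl
  | @insert i s hi ih =>
    rw [Finset.sum_insert hi, Finset.sup_insert]
    have ih' : u (∑ j ∈ s, f j) = s.sup fun j => u (f j) :=
      ih fun j hj k hk hjk => h j (Finset.mem_insert_of_mem hj) k (Finset.mem_insert_of_mem hk) hjk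
    by_cases hcase : u (f i) = u (∑ j ∈ s, f j)
    · by_cases hz : u (f i) = 0
      · have hfi : f i = 0 := u.zero_iff.mp hz
        rw [hfi, zero_add, ih', map_zero]
        exact (sup_eq_right.mpr zero_le').symm
      · exfalso
        have hsne : s.Nonempty := by
          rcases Finset.eq_empty_or_nonempty s with rfl | hne
          · rw [Finset.sum_empty, map_zero] at hcase; exact absurd hcase hz
          · exact hne
        obtain ⟨j, hjs, hj⟩ := Finset.exists_mem_eq_sup s hsne fun j => u (f j)
        have hij : i ≠ j := fun hij => hi (hij ▸ hjs)
        have : u (f i) = u (f j) := by rw [hcase, ih', hj]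
        exact hz (h i (Finset.mem_insert_self i s) j (Finset.mem_insert_of_mem hjs) hij this)
    · rw [u.map_add_of_distinct_val hcase, ih']

end aux

section repr

open Polynomial

variable {L₁ L₂ : Type*} [Field L₁] [Field L₂] [Algebra L₁ L₂]

lemma aux_pow_tower {p : ℕ} (a : ℕ → L₂) (haS : ∀ i : ℕ, (a (i + 1)) ^ p = a i)
    (m k : ℕ) : a m = (a (m + k)) ^ (p ^ k) := by
  induction k with
  | zero => simp
  | succ k ih =>
    rw [ih, pow_succ', pow_mul, ← Nat.add_assoc]
    rw [haS (m + k)]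

lemma aux_pow_root {p : ℕ} {L₁ L₂ : Type*} [Field L₁] [Field L₂] [Algebra L₁ L₂]
    (a : ℕ → L₂) (ha0 : a 0 = algebraMap L₁ L₂ (p : L₁))
    (haS : ∀ i : ℕ, (a (i + 1)) ^ p = a i) (n : ℕ) :
    (a n) ^ (p ^ n) = algebraMap L₁ L₂ (p : L₁) := by
  rw [← ha0, aux_pow_tower a haS 0 n, Nat.zero_add]

lemma aux_repr {p : ℕ} (hp : p.Prime) (a : ℕ → L₂)
    (ha0 : a 0 = algebraMap L₁ L₂ (p : L₁))
    (haS : ∀ i : ℕ, (a (i + 1)) ^ p = a i)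
    (hgen : Algebra.adjoin L₁ (Set.range a) = ⊤) (x : L₂) :
    ∃ n : ℕ, ∃ d : ℕ → L₁,
      x = ∑ r ∈ Finset.range (p ^ n), algebraMap L₁ L₂ (d r) * (a n) ^ r := by
  classical
  have hmono : Monotone fun n => Algebra.adjoin L₁ {a n} := by
    apply monotone_nat_of_le_succ
    intro n
    apply Algebra.adjoin_le
    intro y hy
    rw [Set.mem_singleton_iff] at hy
    subst hy
    rw [aux_pow_tower a haS n 1]
    exact pow_mem (Algebra.self_mem_adjoin_singleton L₁ (a (n+1))) (p ^ 1)
  have hx : x ∈ (⨆ n, Algebra.adjoin L₁ {a n} : Subalgebra L₁ L₂) := by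
    have : Algebra.adjoin L₁ (Set.range a) = ⨆ n, Algebra.adjoin L₁ {a n} := by
      rw [← Algebra.adjoin_iUnion]
      congr 1
      ext y
      simp [Set.mem_range, Set.mem_iUnion, eq_comm]
    rw [← this, hgen]
    trivial
  rw [← SetLike.mem_coe, Subalgebra.coe_iSup_of_directed hmono.directed_le] at hx
  obtain ⟨n, hxn⟩ := Set.mem_iUnion.mp hx
  rw [SetLike.mem_coe, Algebra.adjoin_singleton_eq_range_aeval, AlgHom.mem_range] at hxn
  obtain ⟨f, rfl⟩ := hxn
  set g : L₁[X] := X ^ (p ^ n) - C (p : L₁) with hg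
  have hgm : g.Monic := monic_X_pow_sub_C _ (pow_ne_zero n hp.ne_zero)
  have hgev : aeval (a n) g = 0 := by
    rw [hg, map_sub, map_pow, aeval_X, aeval_C, aux_pow_root a ha0 haS n, sub_self]
  have hfev : aeval (a n) f = aeval (a n) (f %ₘ g) := by
    conv_lhs => rw [← modByMonic_add_div f g]
    rw [map_add, map_mul, hgev, zero_mul, add_zero]
  have hdeg : (f %ₘ g).natDegree < p ^ n := by
    by_cases h0 : f %ₘ g = 0
    · rw [h0]
      simpa using pow_pos hp.pos n
    · have hlt : (f %ₘ g).degree < g.degree := degree_modByMonic_lt f hgm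
      have hgdeg : g.degree = (p ^ n : ℕ) := by
        rw [hg]
        exact degree_X_pow_sub_C (pow_pos hp.pos n) _
      rw [hgdeg] at hlt
      exact (natDegree_lt_iff_degree_lt h0).mpr hlt
  refine ⟨n, fun r => (f %ₘ g).coeff r, ?_⟩
  rw [hfev, aeval_eq_sum_range' hdeg]
  refine Finset.sum_congr rfl fun r _ => ?_
  rw [Algebra.smul_def]

end repr



/-- Let `(L₁, v_p)` be a valued field of characteristic `0` with
`v_p L₁ = ℤ·v_p(p)` and perfect residue field `K` of characteristic `p`.  Choose
`a_0 = p` and `a_i` with `a_i^p = a_{i-1}`, and set `L₂ = L₁(a_i | i ∈ ℕ)`.  Then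
`v_p` extends uniquely to `L₂`, `v_p L₂ = (1/p^∞)ℤ·v_p(p)`, and `L₂ v_p = K`
(the residue field does not grow).

Multiplicative convention: residue characteristic `p` reads `v p < 1`; the value
group conditions are expressed via powers of `v p`. -/
theorem adjoining_p_power_roots_of_p
    {L₁ L₂ : Type*} [Field L₁] [Field L₂] [Algebra L₁ L₂] [CharP L₁ 0]
    {p : ℕ} (hp : p.Prime)
    {Γ : Type*} [LinearOrderedCommGroupWithZero Γ] (v : Valuation L₂ Γ)
    -- residue characteristic `p`
    (hvp : v (algebraMap L₁ L₂ (p : L₁)) < 1)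
    -- `v_p L₁ = ℤ·v_p(p)`
    (hval : ∀ c : L₁, c ≠ 0 → ∃ m : ℤ,
        v (algebraMap L₁ L₂ c) = (v (algebraMap L₁ L₂ (p : L₁))) ^ m)
    -- the residue field `K` of `L₁` is perfect
    (hperf : ∀ c : L₁, v (algebraMap L₁ L₂ c) ≤ 1 →
        ∃ d : L₁, v (algebraMap L₁ L₂ (c - d ^ p)) < 1)
    -- the coherent system of `p`-power roots of `p`, generating `L₂`
    (a : ℕ → L₂) (ha0 : a 0 = algebraMap L₁ L₂ (p : L₁))
    (haS : ∀ i : ℕ, (a (i + 1)) ^ p = a i)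
    (hgen : Algebra.adjoin L₁ (Set.range a) = ⊤) :
    -- `v_p` extends uniquely from `L₁` to `L₂`
    (∀ (Γ' : Type) [LinearOrderedCommGroupWithZero Γ'] (w : Valuation L₂ Γ'),
        (w.comap (algebraMap L₁ L₂)).IsEquiv (v.comap (algebraMap L₁ L₂)) → w.IsEquiv v) ∧
    -- `v_p L₂ = (1/p^∞)·ℤ·v_p(p)`
    (∀ x : L₂, x ≠ 0 → ∃ m : ℤ, ∃ n : ℕ,
        (v x) ^ (p ^ n) = (v (algebraMap L₁ L₂ (p : L₁))) ^ m) ∧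
    (∀ m : ℤ, ∀ n : ℕ, ∃ x : L₂, x ≠ 0 ∧
        (v x) ^ (p ^ n) = (v (algebraMap L₁ L₂ (p : L₁))) ^ m) ∧
    -- `L₂ v_p = L₁ v_p = K`
    (∀ x : L₂, v x ≤ 1 → ∃ c : L₁, v (x - algebraMap L₁ L₂ c) < 1) := by
  classical
  haveI : CharZero L₁ := CharP.charP_to_charZero L₁
  have hp0 : (p : L₁) ≠ 0 := Nat.cast_ne_zero.mpr hp.ne_zero
  have hι0 : ∀ c : L₁, c ≠ 0 → algebraMap L₁ L₂ c ≠ 0 := fun c hc =>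
    (map_ne_zero (algebraMap L₁ L₂)).mpr hc
  set π : Γ := v (algebraMap L₁ L₂ (p : L₁)) with hπdef
  have hπ0 : π ≠ 0 := v.ne_zero_iff.mpr (hι0 _ hp0)
  have hπ1 : π < 1 := hvp
  have hroot := aux_pow_root a ha0 haS
  have hpn0 : ∀ n : ℕ, p ^ n ≠ 0 := fun n => pow_ne_zero n hp.ne_zero
  have han : ∀ n, a n ≠ 0 := by
    intro n h
    apply hι0 _ hp0
    rw [← hroot n, h, zero_pow (hpn0 n)]
  have hring : ∀ (n r : ℕ) (c : L₁),
      (algebraMap L₁ L₂ c * a n ^ r) ^ (p ^ n)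
        = algebraMap L₁ L₂ (c ^ (p ^ n) * (p : L₁) ^ r) := by
    intro n r c
    rw [mul_pow, ← pow_mul, mul_comm r (p ^ n), pow_mul, hroot n,
      ← map_pow (algebraMap L₁ L₂), ← map_pow (algebraMap L₁ L₂), ← map_mul]
  have hexp : ∀ (n r : ℕ) (c : L₁), c ≠ 0 →
      ∃ m : ℤ, v (algebraMap L₁ L₂ c * a n ^ r) ^ (p ^ n)
        = π ^ (m * ((p ^ n : ℕ) : ℤ) + (r : ℤ)) := by
    intro n r c hc
    obtain ⟨m, hm⟩ := hval c hc
    refine ⟨m, ?_⟩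
    rw [← v.map_pow, hring n r c]
    simp only [map_mul, map_pow]
    rw [hm, ← hπdef]
    rw [← zpow_natCast π r, ← zpow_natCast (π ^ m) (p ^ n), ← zpow_mul,
      ← zpow_add₀ hπ0]
  -- distinctness of the v-values of the monomials
  have hterm_ne : ∀ (n : ℕ) (d : ℕ → L₁) (r s : ℕ), r < p ^ n → s < p ^ n →
      d r ≠ 0 → d s ≠ 0 → r ≠ s →
      v (algebraMap L₁ L₂ (d r) * a n ^ r) ≠ v (algebraMap L₁ L₂ (d s) * a n ^ s) := by
    intro n d r s hr hs hdr hds hrs heq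
    obtain ⟨mr, hmr⟩ := hexp n r (d r) hdr
    obtain ⟨ms, hms⟩ := hexp n s (d s) hds
    have hππ : π ^ (mr * ((p ^ n : ℕ) : ℤ) + (r : ℤ))
        = π ^ (ms * ((p ^ n : ℕ) : ℤ) + (s : ℤ)) := by
      rw [← hmr, ← hms, heq]
    have hE := aux_zpow_inj hπ0 hπ1 hππ
    have hd : (((p ^ n : ℕ)) : ℤ) ∣ ((s : ℤ) - (r : ℤ)) :=
      ⟨mr - ms, by linear_combination -hE⟩
    have h0 : (s : ℤ) - (r : ℤ) = 0 := by
      refine Int.eq_zero_of_abs_lt_dvd hd ?_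
      rw [abs_sub_lt_iff]
      constructor <;> omega
    exact hrs (by omega)
  have hvpair : ∀ (n : ℕ) (d : ℕ → L₁), ∀ i ∈ Finset.range (p ^ n), ∀ j ∈ Finset.range (p ^ n),
      i ≠ j → v (algebraMap L₁ L₂ (d i) * a n ^ i) = v (algebraMap L₁ L₂ (d j) * a n ^ j) →
      v (algebraMap L₁ L₂ (d i) * a n ^ i) = 0 := by
    intro n d i hi j hj hij hEq
    by_cases hdi : d i = 0
    · rw [hdi]; simp
    by_cases hdj : d j = 0
    · rw [hEq, hdj]; simp
    · exact absurd hEq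
        (hterm_ne n d i j (Finset.mem_range.mp hi) (Finset.mem_range.mp hj) hdi hdj hij)
  have hvsum : ∀ (n : ℕ) (d : ℕ → L₁),
      v (∑ r ∈ Finset.range (p ^ n), algebraMap L₁ L₂ (d r) * a n ^ r)
        = (Finset.range (p ^ n)).sup (fun r => v (algebraMap L₁ L₂ (d r) * a n ^ r)) :=
    fun n d => aux_map_sum v _ _ (hvpair n d)
  have hvan : ∀ n, v (a n) ^ (p ^ n) = π := fun n => by rw [← v.map_pow, hroot n]
  refine ⟨?_, ?_, ?_, ?_⟩
  · -- Part 1: uniqueness of the extension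
    intro Γ' _ w hw
    rw [Valuation.isEquiv_iff_val_le_one]
    have hle : ∀ c : L₁, w (algebraMap L₁ L₂ c) ≤ 1 ↔ v (algebraMap L₁ L₂ c) ≤ 1 :=
      fun c => Valuation.isEquiv_iff_val_le_one.mp hw (x := c)
    have heq1 : ∀ c : L₁, w (algebraMap L₁ L₂ c) = 1 ↔ v (algebraMap L₁ L₂ c) = 1 :=
      fun c => Valuation.isEquiv_iff_val_eq_one.mp hw (x := c)
    intro x
    by_cases hx : x = 0
    · simp [hx]
    obtain ⟨n, d, rfl⟩ := aux_repr hp a ha0 haS hgen x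
    have hwne : ∀ (r s : ℕ), r < p ^ n → s < p ^ n → d r ≠ 0 → d s ≠ 0 → r ≠ s →
        w (algebraMap L₁ L₂ (d r) * a n ^ r) ≠ w (algebraMap L₁ L₂ (d s) * a n ^ s) := by
      intro r s hr hs hdr hds hrs heq
      set cr : L₁ := d r ^ (p ^ n) * (p : L₁) ^ r with hcrdef
      set cs : L₁ := d s ^ (p ^ n) * (p : L₁) ^ s with hcsdef
      have hcs : cs ≠ 0 := mul_ne_zero (pow_ne_zero _ hds) (pow_ne_zero _ hp0)
      have h1 : w (algebraMap L₁ L₂ cr) = w (algebraMap L₁ L₂ cs) := by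
        rw [hcrdef, hcsdef, ← hring n r (d r), ← hring n s (d s), w.map_pow, w.map_pow, heq]
      have h2 : w (algebraMap L₁ L₂ (cr * cs⁻¹)) = 1 := by
        rw [map_mul, map_inv₀, w.map_mul, w.map_inv, h1,
          mul_inv_cancel₀ (w.ne_zero_iff.mpr (hι0 _ hcs))]
      rw [heq1] at h2
      rw [map_mul, map_inv₀, v.map_mul, v.map_inv,
        mul_inv_eq_one₀ (v.ne_zero_iff.mpr (hι0 _ hcs))] at h2
      have h4 : v (algebraMap L₁ L₂ (d r) * a n ^ r) ^ (p ^ n)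
          = v (algebraMap L₁ L₂ (d s) * a n ^ s) ^ (p ^ n) := by
        rw [← v.map_pow, ← v.map_pow, hring n r (d r), hring n s (d s)]
        exact h2
      exact hterm_ne n d r s hr hs hdr hds hrs (aux_pow_inj (hpn0 n) h4)
    have hwpair : ∀ i ∈ Finset.range (p ^ n), ∀ j ∈ Finset.range (p ^ n),
        i ≠ j → w (algebraMap L₁ L₂ (d i) * a n ^ i) = w (algebraMap L₁ L₂ (d j) * a n ^ j) →
        w (algebraMap L₁ L₂ (d i) * a n ^ i) = 0 := by
      intro i hi j hj hij hEq
      by_cases hdi : d i = 0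
      · rw [hdi]; simp
      by_cases hdj : d j = 0
      · rw [hEq, hdj]; simp
      · exact absurd hEq
          (hwne i j (Finset.mem_range.mp hi) (Finset.mem_range.mp hj) hdi hdj hij)
    have hwsum := aux_map_sum w _ _ hwpair
    rw [hwsum, hvsum n d]
    simp only [Finset.sup_le_iff]
    have hterm_iff : ∀ r : ℕ, (w (algebraMap L₁ L₂ (d r) * a n ^ r) ≤ 1
        ↔ v (algebraMap L₁ L₂ (d r) * a n ^ r) ≤ 1) := by
      intro r
      rw [← aux_pow_le_one_iff (hpn0 n) (γ := w (algebraMap L₁ L₂ (d r) * a n ^ r)),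
        ← aux_pow_le_one_iff (hpn0 n) (γ := v (algebraMap L₁ L₂ (d r) * a n ^ r)),
        ← w.map_pow, ← v.map_pow, hring n r (d r)]
      exact hle _
    exact ⟨fun h r hr => (hterm_iff r).mp (h r hr), fun h r hr => (hterm_iff r).mpr (h r hr)⟩
  · -- Part 2: the value group is contained in (1/p^∞)ℤ·v(p)
    intro x hx
    obtain ⟨n, d, rfl⟩ := aux_repr hp a ha0 haS hgen x
    have hne : v (∑ r ∈ Finset.range (p ^ n), algebraMap L₁ L₂ (d r) * a n ^ r) ≠ 0 :=
      v.ne_zero_iff.mpr hx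
    have hnonempty : (Finset.range (p ^ n)).Nonempty :=
      ⟨0, Finset.mem_range.mpr (Nat.pos_of_ne_zero (hpn0 n))⟩
    obtain ⟨r, hrmem, hr⟩ := Finset.exists_mem_eq_sup _ hnonempty
      (fun r => v (algebraMap L₁ L₂ (d r) * a n ^ r))
    have hvx : v (∑ r ∈ Finset.range (p ^ n), algebraMap L₁ L₂ (d r) * a n ^ r)
        = v (algebraMap L₁ L₂ (d r) * a n ^ r) := by rw [hvsum n d, hr]
    have hdr : d r ≠ 0 := by
      intro h0
      rw [hvx, h0] at hne
      simp at hne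
    obtain ⟨m, hm⟩ := hexp n r (d r) hdr
    exact ⟨m * ((p ^ n : ℕ) : ℤ) + (r : ℤ), n, by rw [hvx, hm]⟩
  · -- Part 3: the value group contains (1/p^∞)ℤ·v(p)
    intro m n
    refine ⟨a n ^ m, zpow_ne_zero m (han n), ?_⟩
    rw [map_zpow₀, ← zpow_natCast (v (a n) ^ m) (p ^ n), ← zpow_mul,
      mul_comm m ((p ^ n : ℕ) : ℤ), zpow_mul, zpow_natCast, hvan n]
  · -- Part 4: the residue field does not grow
    intro x hx
    obtain ⟨n, d, rfl⟩ := aux_repr hp a ha0 haS hgen x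
    refine ⟨d 0, ?_⟩
    have h0mem : 0 ∈ Finset.range (p ^ n) := Finset.mem_range.mpr (Nat.pos_of_ne_zero (hpn0 n))
    have hsplit : (∑ r ∈ Finset.range (p ^ n), algebraMap L₁ L₂ (d r) * a n ^ r)
        - algebraMap L₁ L₂ (d 0)
        = ∑ r ∈ (Finset.range (p ^ n)).erase 0, algebraMap L₁ L₂ (d r) * a n ^ r := by
      rw [← Finset.add_sum_erase _ _ h0mem, pow_zero, mul_one, add_sub_cancel_left]
    rw [hsplit]
    refine v.map_sum_lt one_ne_zero ?_
    intro r hr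
    have hrne0 : r ≠ 0 := (Finset.mem_erase.mp hr).1
    have hrlt : r < p ^ n := Finset.mem_range.mp (Finset.mem_of_mem_erase hr)
    by_cases hdr : d r = 0
    · rw [hdr]; simpa using zero_lt_one
    have hle1 : v (algebraMap L₁ L₂ (d r) * a n ^ r) ≤ 1 := by
      refine le_trans ?_ hx
      rw [hvsum n d]
      exact Finset.le_sup (f := fun r => v (algebraMap L₁ L₂ (d r) * a n ^ r)) (Finset.mem_of_mem_erase hr)
    rcases lt_or_eq_of_le hle1 with h | h
    · exact h
    exfalso
    obtain ⟨m, hm⟩ := hexp n r (d r) hdr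
    have hππ : π ^ (m * ((p ^ n : ℕ) : ℤ) + (r : ℤ)) = π ^ (0 : ℤ) := by
      rw [← hm, h, one_pow, zpow_zero]
    have hE := aux_zpow_inj hπ0 hπ1 hππ
    have hd : (((p ^ n : ℕ)) : ℤ) ∣ (r : ℤ) := ⟨-m, by linear_combination hE⟩
    have h0 : (r : ℤ) = 0 := by
      refine Int.eq_zero_of_abs_lt_dvd hd ?_
      rw [abs_of_nonneg (Int.natCast_nonneg r)]
      omega
    exact hrne0 (by omega)
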